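/- Let ε₀ > 0 and let f : ℂ → ℂ be holomorphic (complex differentiable) on the open horizontal strip S = {z ∈ ℂ : |Im z| < ε₀} and 2π-periodic, i.e. f(z + 2π) = f(z) for all z ∈ S. Then for every ε with 0 < ε < ε₀ there exists a constant C > 0 such that the Fourier coefficients a_k = (1/2π) ∫_{−π}^{π} f(s) e^{−iks} ds satisfy |a_k| ≤ C e^{−ε|k|} for all integers k. -/

import Mathlib

open Complex Real

/-- Paley–Wiener type lemma: a `2π`-periodic function holomorphic on the horizontal strip
`{z : |Im z| < ε₀}` has Fourier coefficients decaying like `e^{-ε|k|}` for every `ε < ε₀`. -/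
theorem fourier_coeff_exp_decay (ε₀ : ℝ) (hε₀ : 0 < ε₀) (f : ℂ → ℂ)
    (hf : DifferentiableOn ℂ f {z : ℂ | |z.im| < ε₀})
    (hper : ∀ z ∈ {z : ℂ | |z.im| < ε₀}, f (z + 2 * π) = f z) :
    ∀ ε : ℝ, 0 < ε → ε < ε₀ →
      ∃ C : ℝ, 0 < C ∧ ∀ k : ℤ,
        ‖(1 / (2 * π)) * ∫ s in (-π : ℝ)..π, f s * Complex.exp (-Complex.I * k * s)‖
          ≤ C * Real.exp (-ε * |k|) := by
  intro ε hε hεε₀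
  have hπ : (0:ℝ) < π := Real.pi_pos
  set S : Set ℂ := {z : ℂ | |z.im| < ε₀} with hS
  -- compact rectangle K and supremum bound M
  set K : Set ℂ := Set.Icc (-π) π ×ℂ Set.Icc (-ε) ε with hKdef
  have hKc : IsCompact K := by
    apply Metric.isCompact_of_isClosed_isBounded
    · exact isClosed_Icc.reProdIm isClosed_Icc
    · exact (Metric.isBounded_Icc _ _).reProdIm (Metric.isBounded_Icc _ _)
  have hKS : K ⊆ S := by
    intro z hz
    have h2 := hz.2
    simp only [Set.mem_preimage, Set.mem_Icc] at h2
    simp only [hS, Set.mem_setOf_eq]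
    rw [abs_lt]
    exact ⟨lt_of_lt_of_le (by linarith) h2.1, lt_of_le_of_lt h2.2 hεε₀⟩
  obtain ⟨M, hM⟩ := hKc.exists_bound_of_continuousOn (hf.continuousOn.mono hKS)
  refine ⟨max M 0 + 1, by positivity, fun k => ?_⟩
  set y : ℝ := -ε * Int.sign k with hydef
  have hsign : |(Int.sign k : ℝ)| ≤ 1 := by
    rcases lt_trichotomy k 0 with h | h | h
    · rw [Int.sign_eq_neg_one_of_neg h]; norm_num
    · simp [h]
    · rw [Int.sign_eq_one_of_pos h]; norm_num
  have hy : |y| ≤ ε := by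
    rw [hydef, abs_mul, abs_neg, abs_of_pos hε]
    calc ε * |(Int.sign k : ℝ)| ≤ ε * 1 := by
          exact mul_le_mul_of_nonneg_left hsign hε.le
      _ = ε := mul_one ε
  have hky : (k : ℝ) * y = -ε * |(k : ℝ)| := by
    rcases lt_trichotomy k 0 with h | h | h
    · rw [hydef, Int.sign_eq_neg_one_of_neg h]
      rw [abs_of_neg (by exact_mod_cast h : (k:ℝ) < 0)]
      push_cast; ring
    · simp [h, hydef]
    · rw [hydef, Int.sign_eq_one_of_pos h]
      rw [abs_of_pos (by exact_mod_cast h : (0:ℝ) < (k:ℝ))]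
      push_cast; ring
  -- the integrand
  set g : ℂ → ℂ := fun z => f z * Complex.exp (-Complex.I * k * z) with hgdef
  have hgd : DifferentiableOn ℂ g S := by
    apply hf.mul
    exact (((differentiable_const (-Complex.I * (k:ℂ))).mul differentiable_fun_id).cexp.comp
      differentiable_fun_id).differentiableOn |>.congr (fun z _ => by simp [mul_assoc]) |>.mono
      (by intro z hz; exact Set.mem_univ z) |>.congr (fun z _ => rfl)
  have hgper : ∀ z ∈ S, g (z + 2 * π) = g z := by
    intro z hz
    have h1 : Complex.exp (-Complex.I * k * (z + 2 * π)) =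
        Complex.exp (-Complex.I * k * z) := by
      rw [show -Complex.I * k * (z + 2 * (π:ℂ)) =
          -Complex.I * k * z + ((-k : ℤ) : ℂ) * (2 * π * Complex.I) by push_cast; ring,
        Complex.exp_add, Complex.exp_int_mul_two_pi_mul_I, mul_one]
    simp only [hgdef]
    rw [hper z hz, h1]
  -- uIcc 0 y ⊆ Icc (-ε) ε and similar facts
  have huIcc : Set.uIcc (0:ℝ) y ⊆ Set.Icc (-ε) ε := by
    intro t ht
    rw [Set.mem_uIcc] at ht
    constructor
    · rcases ht with ⟨h1, _⟩ | ⟨h1, _⟩ <;> cases' abs_le.1 hy with hy1 hy2 <;> linarith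
    · rcases ht with ⟨_, h2⟩ | ⟨_, h2⟩ <;> cases' abs_le.1 hy with hy1 hy2 <;> linarith
  -- contour shift via Cauchy on a rectangle
  have key : (∫ s in (-π:ℝ)..π, f s * Complex.exp (-Complex.I * k * s)) =
      ∫ s in (-π:ℝ)..π, g (s + y * Complex.I) := by
    have hrect := Complex.integral_boundary_rect_eq_zero_of_differentiableOn g
      ⟨-π, 0⟩ ⟨π, y⟩ ?_
    · have hre1 : (⟨-π, 0⟩ : ℂ).re = -π := rfl
      have him1 : (⟨-π, 0⟩ : ℂ).im = 0 := rfl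
      have hre2 : (⟨π, y⟩ : ℂ).re = π := rfl
      have him2 : (⟨π, y⟩ : ℂ).im = y := rfl
      rw [hre1, him1, hre2, him2] at hrect
      -- vertical sides cancel by periodicity
      have hv : (∫ t in (0:ℝ)..y, g ((π:ℂ) + t * Complex.I)) =
          ∫ t in (0:ℝ)..y, g ((-π:ℝ) + t * Complex.I) := by
        apply intervalIntegral.integral_congr
        intro t ht
        have htε : |t| < ε₀ := by
          have := huIcc ht
          rw [Set.mem_Icc] at this
          rw [abs_lt]; exact ⟨by linarith, by linarith⟩
        have hmem : ((-π:ℝ) : ℂ) + t * Complex.I ∈ S := by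
          simp only [hS, Set.mem_setOf_eq]
          simpa using htε
        have := hgper _ hmem
        rw [show ((-π:ℝ) : ℂ) + t * Complex.I + 2 * (π:ℂ) = (π:ℂ) + t * Complex.I by
          push_cast; ring] at this
        exact this
      have hz : (∫ x : ℝ in (-π:ℝ)..π, g (x + (0:ℝ) * Complex.I)) =
          ∫ s in (-π:ℝ)..π, f s * Complex.exp (-Complex.I * k * s) := by
        apply intervalIntegral.integral_congr
        intro s _
        simp [hgdef]
      rw [hv] at hrect
      have heq : (∫ x : ℝ in (-π:ℝ)..π, g (x + ((0:ℝ):ℂ) * Complex.I)) =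
          ∫ x : ℝ in (-π:ℝ)..π, g (x + ((y:ℝ):ℂ) * Complex.I) := by
        simp only [smul_eq_mul] at hrect
        linear_combination hrect
      rw [← hz, heq]
    · -- differentiability on the closed rectangle
      apply hgd.mono
      intro z hz
      have h2 := hz.2
      simp only [Set.mem_preimage] at h2
      have : z.im ∈ Set.Icc (-ε) ε := huIcc h2
      rw [Set.mem_Icc] at this
      simp only [hS, Set.mem_setOf_eq]
      rw [abs_lt]
      exact ⟨by linarith, by linarith⟩
  rw [key, norm_mul]
  -- bound the shifted integral
  have hbound : ‖∫ s in (-π:ℝ)..π, g ((s:ℂ) + y * Complex.I)‖ ≤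
      (max M 0 * Real.exp (-ε * |(k:ℝ)|)) * |π - (-π)| := by
    apply intervalIntegral.norm_integral_le_of_norm_le_const
    intro s hs
    have hsmem : s ∈ Set.Icc (-π) π := by
      rw [Set.uIoc_of_le (by linarith : (-π:ℝ) ≤ π)] at hs
      exact ⟨hs.1.le, hs.2⟩
    have hmemK : (s:ℂ) + y * Complex.I ∈ K := by
      constructor
      · simp only [Set.mem_preimage]
        simpa using hsmem
      · simp only [Set.mem_preimage]
        have : ((s:ℂ) + y * Complex.I).im = y := by simp
        rw [this]
        exact abs_le.1 hy |>.imp_left id |> fun _ => Set.mem_Icc.2 ⟨(abs_le.1 hy).1, (abs_le.1 hy).2⟩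
    have hexp : ‖Complex.exp (-Complex.I * k * ((s:ℂ) + y * Complex.I))‖ =
        Real.exp (-ε * |(k:ℝ)|) := by
      rw [Complex.norm_exp]
      congr 1
      have : (-Complex.I * k * ((s:ℂ) + y * Complex.I)).re = (k:ℝ) * y := by
        simp [Complex.mul_re, Complex.add_re, Complex.add_im]
      rw [this, hky]
    simp only [hgdef]
    rw [norm_mul, hexp]
    apply mul_le_mul_of_nonneg_right _ (Real.exp_nonneg _)
    exact le_trans (hM _ hmemK) (le_max_left _ _)
  have hnorm : ‖(1 / (2 * (π:ℂ)))‖ = 1 / (2 * π) := by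
    simp [abs_of_pos hπ]
  rw [hnorm]
  have habs : |π - (-π)| = 2 * π := by rw [abs_of_pos (by linarith)]; ring
  calc 1 / (2 * π) * ‖∫ s in (-π:ℝ)..π, g ((s:ℂ) + y * Complex.I)‖
      ≤ 1 / (2 * π) * ((max M 0 * Real.exp (-ε * |(k:ℝ)|)) * |π - (-π)|) := by
        apply mul_le_mul_of_nonneg_left hbound (by positivity)
    _ = max M 0 * Real.exp (-ε * |(k:ℝ)|) := by
        rw [habs]; field_simp
    _ ≤ (max M 0 + 1) * Real.exp (-ε * |(k:ℝ)|) := by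
        apply mul_le_mul_of_nonneg_right (by linarith) (Real.exp_nonneg _)
    _ = (max M 0 + 1) * Real.exp (-ε * |k|) := by rw [Int.cast_abs]
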